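/- Let q be a finite-dimensional Lie algebra over a field of characteristic zero and x ∈ q. Assume that z_q(x) is abelian and q = [q,x] ⊕ z_q(x) (direct sum of subspaces). Then the dual space q* decomposes as the direct sum q* = (x·q*) ⊕ (q*)^x of the image of the coadjoint action of x and the fixed-point space of x; moreover (q*)^x = (q*)^{z_q(x)}. -/
import Mathlib


/-- The coadjoint action of `x : L` on the dual space: `(coad k x f) y = - f ⁅x, y⁆`. -/
noncomputable def coad (k : Type*) {L : Type*} [Field k] [LieRing L] [LieAlgebra k L]
    (x : L) : Module.Dual k L →ₗ[k] Module.Dual k L where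
  toFun f := -(f ∘ₗ (LieAlgebra.ad k L x : L →ₗ[k] L))
  map_add' f g := by ext y; simp [add_comm]
  map_smul' c f := by ext y; simp

/-- For `ξ` in the dual space, the linear map `z ↦ z · ξ` (coadjoint action on `ξ`);
its range is the tangent space `q·ξ` of the coadjoint orbit and its kernel is the
stabiliser `q_ξ`. -/
noncomputable def coadOrbitMap (k : Type*) {L : Type*} [Field k] [LieRing L] [LieAlgebra k L]
    (ξ : Module.Dual k L) : L →ₗ[k] Module.Dual k L where
  toFun z := coad k z ξ
  map_add' z w := by ext y; simp [coad, add_comm]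
  map_smul' c z := by ext y; simp [coad]


/-- Let `q` be a finite-dimensional Lie algebra over a field of
characteristic zero and `x ∈ q` with `z_q(x)` abelian and `q = [q,x] ⊕ z_q(x)`.
Then `q* = (x·q*) ⊕ (q*)^x`, and moreover `(q*)^x = (q*)^{z_q(x)}`. -/
theorem dual_decomposition_of_generic_point
    {k L : Type*} [Field k] [CharZero k] [LieRing L] [LieAlgebra k L]
    [FiniteDimensional k L] (x : L)
    (hab : ∀ y z : L, ⁅x, y⁆ = 0 → ⁅x, z⁆ = 0 → ⁅y, z⁆ = 0)
    (hsum : LinearMap.range (LieAlgebra.ad k L x) ⊔ LinearMap.ker (LieAlgebra.ad k L x) = ⊤)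
    (hint : LinearMap.range (LieAlgebra.ad k L x) ⊓ LinearMap.ker (LieAlgebra.ad k L x) = ⊥) :
    (LinearMap.range (coad k x) ⊔ LinearMap.ker (coad k x) = ⊤ ∧
      LinearMap.range (coad k x) ⊓ LinearMap.ker (coad k x) = ⊥) ∧
    (∀ f : Module.Dual k L, coad k x f = 0 ↔ ∀ z : L, ⁅x, z⁆ = 0 → coad k z f = 0) := by
  have hcoad : ∀ z : L, coad k z = -((LieAlgebra.ad k L z).dualMap) := by
    intro z; ext f y
    simp [coad, LinearMap.dualMap_apply]
  constructor
  · have hr : LinearMap.range (coad k x) =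
        (LinearMap.ker (LieAlgebra.ad k L x)).dualAnnihilator := by
      rw [hcoad x, LinearMap.range_neg, LinearMap.range_dualMap_eq_dualAnnihilator_ker]
    have hkn : LinearMap.ker (-(LieAlgebra.ad k L x).dualMap) =
        LinearMap.ker ((LieAlgebra.ad k L x).dualMap) := by
      ext f; simp [LinearMap.mem_ker, neg_eq_zero]
    have hk : LinearMap.ker (coad k x) =
        (LinearMap.range (LieAlgebra.ad k L x)).dualAnnihilator := by
      rw [hcoad x, hkn, LinearMap.ker_dualMap_eq_dualAnnihilator_range]
    constructor
    · have h1 : LinearMap.ker (LieAlgebra.ad k L x) ⊓ LinearMap.range (LieAlgebra.ad k L x)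
          = ⊥ := by rw [inf_comm]; exact hint
      rw [hr, hk, ← Subspace.dualAnnihilator_inf_eq, h1, Submodule.dualAnnihilator_bot]
    · have h1 : LinearMap.ker (LieAlgebra.ad k L x) ⊔ LinearMap.range (LieAlgebra.ad k L x)
          = ⊤ := by rw [sup_comm]; exact hsum
      rw [hr, hk, ← Submodule.dualAnnihilator_sup_eq, h1, Submodule.dualAnnihilator_top]
  · intro f
    have key : ∀ (z : L) (g : Module.Dual k L), coad k z g = 0 ↔ ∀ y, g ⁅z, y⁆ = 0 := by
      intro z g
      constructor
      · intro h y
        have := LinearMap.congr_fun h y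
        simpa [coad, neg_eq_zero] using this
      · intro h
        apply LinearMap.ext
        intro y
        simp [coad, h y]
    constructor
    · intro hf z hz
      rw [key] at hf ⊢
      intro y
      have hy : y ∈ LinearMap.range (LieAlgebra.ad k L x) ⊔
          LinearMap.ker (LieAlgebra.ad k L x) := by rw [hsum]; trivial
      obtain ⟨a, ha, c, hc, rfl⟩ := Submodule.mem_sup.mp hy
      obtain ⟨w, rfl⟩ := ha
      have hc' : ⁅x, c⁆ = 0 := hc
      have hzc : ⁅z, c⁆ = 0 := hab z c hz hc'
      have hzx : ⁅z, x⁆ = 0 := by rw [← neg_eq_zero, lie_skew]; exact hz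
      have hrw : ⁅z, LieAlgebra.ad k L x w + c⁆ = ⁅x, ⁅z, w⁆⁆ := by
        have had : (LieAlgebra.ad k L x) w = ⁅x, w⁆ := rfl
        rw [had, lie_add, hzc, add_zero, leibniz_lie, hzx, zero_lie, zero_add]
      rw [hrw]; exact hf ⁅z, w⁆
    · intro h
      exact h x (lie_self x)
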